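/- Let φ ∈ S⁴ be a nonzero homogeneous quartic binary form and suppose there exists C ∈ sl₂(ℂ) with C·φ = 2φ. Then φ has a linear factor of multiplicity at least 3; that is, there exist linear forms α and β with φ = α³β. -/

import Mathlib

open MvPolynomial

/-- The action of `A ∈ sl₂(ℂ)` on `ℂ[x,y]` by derivations:
`A·f = −(a x + c y) ∂f/∂x − (b x + d y) ∂f/∂y` for `A = [[a,b],[c,d]]`. -/
noncomputable def sAct (A : Matrix (Fin 2) (Fin 2) ℂ) (f : MvPolynomial (Fin 2) ℂ) :
    MvPolynomial (Fin 2) ℂ :=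
  -((C (A 0 0) * X 0 + C (A 1 0) * X 1) * pderiv 0 f)
    - ((C (A 0 1) * X 0 + C (A 1 1) * X 1) * pderiv 1 f)

/-- A linear form: a nonzero homogeneous degree-1 polynomial in `ℂ[x,y]`. -/
def IsLinForm (α : MvPolynomial (Fin 2) ℂ) : Prop := α ≠ 0 ∧ α.IsHomogeneous 1

namespace QWT

abbrev P2 := MvPolynomial (Fin 2) ℂ

/-- canonical exponent function on two variables -/
noncomputable def sg (p q : ℕ) : Fin 2 →₀ ℕ := Finsupp.single 0 p + Finsupp.single 1 q

lemma sg_apply0 (p q : ℕ) : sg p q 0 = p := by simp [sg, Finsupp.single_apply]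

lemma sg_apply1 (p q : ℕ) : sg p q 1 = q := by simp [sg, Finsupp.single_apply]

lemma sg_eq_iff {p q r s : ℕ} : sg p q = sg r s ↔ p = r ∧ q = s := by
  constructor
  · intro h
    exact ⟨by simpa [sg_apply0] using DFunLike.congr_fun h 0,
           by simpa [sg_apply1] using DFunLike.congr_fun h 1⟩
  · rintro ⟨rfl, rfl⟩; rfl

lemma fin2_rep (d : Fin 2 →₀ ℕ) : d = sg (d 0) (d 1) := by
  ext i; fin_cases i <;> simp [sg_apply0, sg_apply1]

lemma sg_sub0 (p q : ℕ) : sg p q - Finsupp.single 0 1 = sg (p-1) q := by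
  ext i; fin_cases i <;> simp [sg, Finsupp.single_apply, Finsupp.tsub_apply]

lemma sg_sub1 (p q : ℕ) : sg p q - Finsupp.single 1 1 = sg p (q-1) := by
  ext i; fin_cases i <;> simp [sg, Finsupp.single_apply, Finsupp.tsub_apply]

lemma sg_degree (p q : ℕ) : (sg p q).degree = p + q := by
  rw [Finsupp.degree_apply, Finset.sum_subset (Finset.subset_univ _)
    (fun i _ hi => Finsupp.notMem_support_iff.mp hi), Fin.sum_univ_two, sg_apply0, sg_apply1]

lemma monomial_sg (p q : ℕ) (k : ℂ) :
    (monomial (sg p q) k : P2) = C k * X 0 ^ p * X 1 ^ q := by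
  rw [X_pow_eq_monomial, X_pow_eq_monomial, C_mul_monomial, monomial_mul, sg]; simp

lemma mulX0_monomial (k v : ℂ) (p q : ℕ) :
    (C k * X 0 : P2) * monomial (sg p q) v = monomial (sg (p+1) q) (k*v) := by
  rw [monomial_sg, monomial_sg, C_mul]; ring

lemma mulX1_monomial (k v : ℂ) (p q : ℕ) :
    (C k * X 1 : P2) * monomial (sg p q) v = monomial (sg p (q+1)) (k*v) := by
  rw [monomial_sg, monomial_sg, C_mul]; ring

lemma hom_rep (φ : P2) (hφ : φ.IsHomogeneous 4) :
    φ = monomial (sg 4 0) (coeff (sg 4 0) φ) + monomial (sg 3 1) (coeff (sg 3 1) φ)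
      + monomial (sg 2 2) (coeff (sg 2 2) φ) + monomial (sg 1 3) (coeff (sg 1 3) φ)
      + monomial (sg 0 4) (coeff (sg 0 4) φ) := by
  apply MvPolynomial.ext
  intro d
  obtain ⟨p, q, rfl⟩ : ∃ p q, d = sg p q := ⟨d 0, d 1, fin2_rep d⟩
  by_cases h4 : p + q = 4
  · obtain ⟨rfl, rfl⟩ | ⟨rfl, rfl⟩ | ⟨rfl, rfl⟩ | ⟨rfl, rfl⟩ | ⟨rfl, rfl⟩ :
        (p = 4 ∧ q = 0) ∨ (p = 3 ∧ q = 1) ∨ (p = 2 ∧ q = 2) ∨ (p = 1 ∧ q = 3)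
          ∨ (p = 0 ∧ q = 4) := by omega
    all_goals simp [coeff_add, coeff_monomial, sg_eq_iff]
  · rw [hφ.coeff_eq_zero (by rw [sg_degree]; exact h4)]
    simp only [coeff_add, coeff_monomial, sg_eq_iff]
    split_ifs <;> first | omega | simp

lemma isLin (p q : ℂ) (h : p ≠ 0 ∨ q ≠ 0) : IsLinForm (C p * X 0 + C q * X 1) := by
  have hrep : (C p * X 0 + C q * X 1 : P2) = monomial (sg 1 0) p + monomial (sg 0 1) q := by
    rw [monomial_sg, monomial_sg]; ring
  constructor
  · intro H
    rw [hrep] at H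
    have h0 : p = 0 := by
      have := congrArg (coeff (sg 1 0)) H
      simpa [coeff_add, coeff_monomial, sg_eq_iff] using this
    have h1 : q = 0 := by
      have := congrArg (coeff (sg 0 1)) H
      simpa [coeff_add, coeff_monomial, sg_eq_iff] using this
    tauto
  · rw [hrep]
    exact (isHomogeneous_monomial _ (by rw [sg_degree])).add
      (isHomogeneous_monomial _ (by rw [sg_degree]))

end QWT

open QWT

set_option maxHeartbeats 2000000 in
/-- If a nonzero quartic binary form `φ` admits `C ∈ sl₂(ℂ)` with `C·φ = 2φ`, then
`φ = α³β` for some linear forms `α, β`. -/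
theorem quartic_with_weight_two_conformal (φ : MvPolynomial (Fin 2) ℂ)
    (hφ0 : φ ≠ 0) (hφ : φ.IsHomogeneous 4)
    (Cm : Matrix (Fin 2) (Fin 2) ℂ) (hC : Cm.trace = 0)
    (h : sAct Cm φ = (2 : ℂ) • φ) :
    ∃ α β : MvPolynomial (Fin 2) ℂ, IsLinForm α ∧ IsLinForm β ∧ φ = α ^ 3 * β := by
  set a := Cm 0 0 with ha
  set b := Cm 0 1 with hbdef
  set cc := Cm 1 0 with hccdef
  have hd : Cm 1 1 = -a := by
    rw [Matrix.trace_fin_two] at hC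
    linear_combination hC
  have hrep := hom_rep φ hφ
  set c0 := coeff (sg 4 0) φ with hc0
  set c1 := coeff (sg 3 1) φ with hc1
  set c2 := coeff (sg 2 2) φ with hc2
  set c3 := coeff (sg 1 3) φ with hc3
  set c4 := coeff (sg 0 4) φ with hc4
  rw [hrep] at h
  simp only [sAct, map_add, pderiv_monomial, sg_sub0, sg_sub1, sg_apply0, sg_apply1,
    mul_add, add_mul, mulX0_monomial, mulX1_monomial, hd] at h
  have E0 := congrArg (coeff (sg 4 0)) h
  have E1 := congrArg (coeff (sg 3 1)) h
  have E2 := congrArg (coeff (sg 2 2)) h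
  have E3 := congrArg (coeff (sg 1 3)) h
  have E4 := congrArg (coeff (sg 0 4)) h
  simp only [coeff_add, coeff_sub, coeff_neg, MvPolynomial.coeff_smul, coeff_monomial,
    sg_eq_iff, smul_eq_mul] at E0 E1 E2 E3 E4
  norm_num at E0 E1 E2 E3 E4
  simp only [← ha, ← hbdef, ← hccdef] at E0 E1 E2 E3 E4
  have hne : ¬(c0 = 0 ∧ c1 = 0 ∧ c2 = 0 ∧ c3 = 0 ∧ c4 = 0) := by
    rintro ⟨z0, z1, z2, z3, z4⟩
    apply hφ0
    rw [hrep, z0, z1, z2, z3, z4]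
    simp
  by_cases hb0 : b = 0
  · -- b = 0
    rw [hb0] at E0 E1 E2 E3
    by_cases hA : a = -1/2
    · -- φ = c0 (x - cc y)^4
      have K1 : c1 = -4*cc*c0 := by linear_combination (-1 : ℂ)*E1 + (-2*c1)*hA
      have K2 : c2 = 6*cc^2*c0 := by linear_combination (-1/2 : ℂ)*E2 + (-3/2*cc)*K1
      have K3 : c3 = -4*cc^3*c0 := by
        linear_combination (-1/3 : ℂ)*E3 + (-2/3*cc)*K2 + (2/3*c3)*hA
      have K4 : c4 = cc^4*c0 := by
        linear_combination (-1/4 : ℂ)*E4 + (-1/4*cc)*K3 + c4*hA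
      have hc0ne : c0 ≠ 0 := by
        intro z
        exact hne ⟨z, by rw [K1, z]; ring, by rw [K2, z]; ring, by rw [K3, z]; ring,
          by rw [K4, z]; ring⟩
      refine ⟨C 1 * X 0 + C (-cc) * X 1, C c0 * X 0 + C (-(cc*c0)) * X 1,
        isLin _ _ (Or.inl one_ne_zero), isLin _ _ (Or.inl hc0ne), ?_⟩
      have L1 := congrArg (C : ℂ → P2) K1
      have L2 := congrArg (C : ℂ → P2) K2
      have L3 := congrArg (C : ℂ → P2) K3
      have L4 := congrArg (C : ℂ → P2) K4
      simp only [C_mul, C_add, C_sub, C_neg, C_pow, C_0, C_1, map_ofNat] at L1 L2 L3 L4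
      rw [hrep]
      simp only [monomial_sg, C_0, C_1, C_neg, C_mul, one_mul]
      linear_combination (X 0:P2)^3 * X 1 * L1 + (X 0:P2)^2 * (X 1)^2 * L2
        + (X 0:P2) * (X 1)^3 * L3 + (X 1:P2)^4 * L4
    · by_cases hB : a = 1/2
      · -- φ = c4 y^4
        have Z0 : c0 = 0 := by linear_combination (-1/4 : ℂ)*E0 + (-c0)*hB
        have Z1 : c1 = 0 := by
          linear_combination (-1/3 : ℂ)*E1 + (-4/3*cc)*Z0 + (-2/3*c1)*hB
        have Z2 : c2 = 0 := by linear_combination (-1/2 : ℂ)*E2 + (-3/2*cc)*Z1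
        have Z3 : c3 = 0 := by linear_combination (-1 : ℂ)*E3 + (-2*cc)*Z2 + (2*c3)*hB
        have hc4ne : c4 ≠ 0 := fun z => hne ⟨Z0, Z1, Z2, Z3, z⟩
        refine ⟨C 0 * X 0 + C 1 * X 1, C 0 * X 0 + C c4 * X 1,
          isLin _ _ (Or.inr one_ne_zero), isLin _ _ (Or.inr hc4ne), ?_⟩
        have L0 := congrArg (C : ℂ → P2) Z0
        have L1 := congrArg (C : ℂ → P2) Z1
        have L2 := congrArg (C : ℂ → P2) Z2
        have L3 := congrArg (C : ℂ → P2) Z3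
        simp only [C_0] at L0 L1 L2 L3
        rw [hrep]
        simp only [monomial_sg, C_0, C_1, one_mul, zero_mul, zero_add, add_zero]
        linear_combination (X 0:P2)^4 * L0 + (X 0:P2)^3 * X 1 * L1
          + (X 0:P2)^2 * (X 1)^2 * L2 + (X 0:P2) * (X 1)^3 * L3
      · by_cases hD : a = -1
        · -- φ = c1 (2x - cc y)^3 (y c1/8) scaled
          have Z0 : c0 = 0 := by linear_combination (1/2 : ℂ)*E0 + (2*c0)*hD
          have K2 : 2*c2 = -3*cc*c1 := by linear_combination (-1 : ℂ)*E2
          have K3 : 4*c3 = 3*cc^2*c1 := by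
            linear_combination (-1 : ℂ)*E3 + (-cc)*K2 + (2*c3)*hD
          have K4 : 8*c4 = -(cc^3*c1) := by
            linear_combination (-4/3 : ℂ)*E4 + (-1/3*cc)*K3 + (16/3*c4)*hD
          have hc1ne : c1 ≠ 0 := by
            intro z
            refine hne ⟨Z0, z, ?_, ?_, ?_⟩
            · linear_combination (1/2 : ℂ)*K2 + (-3/2*cc)*z
            · linear_combination (1/4 : ℂ)*K3 + (3/4*cc^2)*z
            · linear_combination (1/8 : ℂ)*K4 + (-1/8*cc^3)*z
          have ht : (8:ℂ)*(c1/8) = c1 := by ring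
          refine ⟨C 2 * X 0 + C (-cc) * X 1, C 0 * X 0 + C (c1/8) * X 1,
            isLin _ _ (Or.inl two_ne_zero), isLin _ _ (Or.inr (by
              intro z; exact hc1ne (by rw [← ht, z]; ring))), ?_⟩
          apply mul_left_cancel₀ (show (C (8:ℂ) : P2) ≠ 0 by simp)
          have L0 := congrArg (C : ℂ → P2) Z0
          have L2 := congrArg (C : ℂ → P2) K2
          have L3 := congrArg (C : ℂ → P2) K3
          have L4 := congrArg (C : ℂ → P2) K4
          have Lt := congrArg (C : ℂ → P2) ht
          simp only [C_mul, C_add, C_sub, C_neg, C_pow, C_0, C_1, map_ofNat]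
            at L0 L2 L3 L4 Lt
          rw [hrep]
          simp only [monomial_sg, C_mul, C_add, C_sub, C_neg, C_pow, C_0, C_1,
            map_ofNat, one_mul, zero_mul, zero_add, add_zero]
          linear_combination (8:P2) * (X 0)^4 * L0
            + (4:P2) * (X 0)^2 * (X 1)^2 * L2
            + (2:P2) * (X 0) * (X 1)^3 * L3
            + (X 1:P2)^4 * L4
            - (((2:P2) * X 0 - C cc * X 1))^3 * X 1 * Lt
        · by_cases hE : a = 1
          · -- φ = y^3 (c3 x + cc c3/2 y)
            have Z0 : c0 = 0 := by linear_combination (-1/6 : ℂ)*E0 + (-2/3*c0)*hE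
            have Z1 : c1 = 0 := by
              linear_combination (-1/4 : ℂ)*E1 + (-cc)*Z0 + (-1/2*c1)*hE
            have Z2 : c2 = 0 := by linear_combination (-1/2 : ℂ)*E2 + (-3/2*cc)*Z1
            have K4 : 2*c4 = cc*c3 := by linear_combination E4 + (-4*c4)*hE
            have hc3ne : c3 ≠ 0 := by
              intro z
              refine hne ⟨Z0, Z1, Z2, z, ?_⟩
              linear_combination (1/2 : ℂ)*K4 + (1/2*cc)*z
            have ht : (2:ℂ)*(cc*c3/2) = cc*c3 := by ring
            refine ⟨C 0 * X 0 + C 1 * X 1, C c3 * X 0 + C (cc*c3/2) * X 1,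
              isLin _ _ (Or.inr one_ne_zero), isLin _ _ (Or.inl hc3ne), ?_⟩
            apply mul_left_cancel₀ (show (C (2:ℂ) : P2) ≠ 0 by simp)
            have L0 := congrArg (C : ℂ → P2) Z0
            have L1 := congrArg (C : ℂ → P2) Z1
            have L2 := congrArg (C : ℂ → P2) Z2
            have L4 := congrArg (C : ℂ → P2) K4
            have Lt := congrArg (C : ℂ → P2) ht
            simp only [C_mul, C_add, C_sub, C_neg, C_pow, C_0, C_1, map_ofNat]
              at L0 L1 L2 L4 Lt
            rw [hrep]
            simp only [monomial_sg, C_0, C_1, one_mul, zero_mul, zero_add, add_zero,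
              map_ofNat]
            linear_combination (2:P2) * (X 0)^4 * L0 + (2:P2) * (X 0)^3 * X 1 * L1
              + (2:P2) * (X 0)^2 * (X 1)^2 * L2 + (X 1:P2)^4 * L4
              - (X 1:P2)^4 * Lt
          · -- generic a : contradiction
            exfalso
            have Z0 : c0 = 0 := by
              have : (4*a+2)*c0 = 0 := by linear_combination (-1 : ℂ)*E0
              rcases mul_eq_zero.mp this with H | H
              · exact absurd (by linear_combination (1/4:ℂ)*H) hA
              · exact H
            have Z1 : c1 = 0 := by
              have : (2*a+2)*c1 = 0 := by linear_combination (-1 : ℂ)*E1 + (-4*cc)*Z0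
              rcases mul_eq_zero.mp this with H | H
              · exact absurd (by linear_combination (1/2:ℂ)*H) hD
              · exact H
            have Z2 : c2 = 0 := by
              linear_combination (-1/2 : ℂ)*E2 + (-3/2*cc)*Z1
            have Z3 : c3 = 0 := by
              have : (2-2*a)*c3 = 0 := by linear_combination (-1 : ℂ)*E3 + (-2*cc)*Z2
              rcases mul_eq_zero.mp this with H | H
              · exact absurd (by linear_combination (-1/2:ℂ)*H) hE
              · exact H
            have Z4 : c4 = 0 := by
              have : (2-4*a)*c4 = 0 := by linear_combination (-1 : ℂ)*E4 + (-cc)*Z3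
              rcases mul_eq_zero.mp this with H | H
              · exact absurd (by linear_combination (-1/4:ℂ)*H) hB
              · exact H
            exact hne ⟨Z0, Z1, Z2, Z3, Z4⟩
  · -- b ≠ 0
    have H1 : b*c1 = (-4*a-2)*c0 := by linear_combination (-1 : ℂ)*E0
    have H2 : 2*b^2*c2 = (8*a^2+12*a+4-4*b*cc)*c0 := by
      linear_combination (-b)*E1 + (-2*a-2)*H1
    have H3 : 3*b^3*c3 = (-8*a^2-12*a-4+10*b*cc+12*a*b*cc)*c0 := by
      linear_combination (-b^2)*E2 + (-3*cc*b)*H1 + (-1 : ℂ)*H2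
    have H4 : 12*b^4*c4 = (-16*a^3-8*a^2+16*a+8-40*a*b*cc-32*b*cc+12*b^2*cc^2)*c0 := by
      linear_combination (-3*b^3)*E3 + (2*a-2)*H3 + (-3*b*cc)*H2
    have hc0ne : c0 ≠ 0 := by
      intro z
      rw [z, mul_zero] at H1 H2 H3 H4
      refine hne ⟨z, ?_, ?_, ?_, ?_⟩
      · rcases mul_eq_zero.mp H1 with H | H
        · exact absurd H hb0
        · exact H
      · have := mul_eq_zero.mp H2
        simp [hb0] at this
        tauto
      · have := mul_eq_zero.mp H3
        simp [hb0] at this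
        tauto
      · have := mul_eq_zero.mp H4
        simp [hb0] at this
        tauto
    have KEY : (a^2+b*cc-1)*(4*a^2+4*b*cc-1)*c0 = 0 := by
      linear_combination (-3/4*b^4)*E4 + ((4*a-2)/16)*H4 + (-(b*cc)/4)*H3
    have hCb : (C b : P2) ≠ 0 := by simpa using hb0
    rcases mul_eq_zero.mp KEY with HS | H
    swap
    · exact absurd H hc0ne
    rcases mul_eq_zero.mp HS with HS1 | HS4
    · -- s = 1
      have hs : a^2 + b*cc = 1 := by linear_combination HS1
      have K1 : b^4*c1 = (-4*a*b^3-2*b^3)*c0 := by linear_combination b^3*H1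
      have K2 : b^4*c2 = (6*a^2*b^2+6*a*b^2)*c0 := by
        linear_combination (b^2/2)*H2 + (-2*b^2*c0)*hs
      have K3 : b^4*c3 = (-4*a^3*b-6*a^2*b+2*b)*c0 := by
        linear_combination (b/3)*H3 + ((12*a*b+10*b)/3*c0)*hs
      have K4 : b^4*c4 = (a^4+2*a^3-2*a-1)*c0 := by
        linear_combination ((1:ℂ)/12)*H4 + ((-12*a^2-40*a+12*b*cc-20)/12*c0)*hs
      have ht1 : b^4*(c0*b/b^4) = c0*b := by field_simp
      have ht2 : b^4*(c0*(1-a)/b^4) = c0*(1-a) := by field_simp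
      refine ⟨C b * X 0 + C (-(a+1)) * X 1,
        C (c0*b/b^4) * X 0 + C (c0*(1-a)/b^4) * X 1,
        isLin _ _ (Or.inl hb0),
        isLin _ _ (Or.inl (div_ne_zero (mul_ne_zero hc0ne hb0) (pow_ne_zero _ hb0))), ?_⟩
      apply mul_left_cancel₀ (show (C (b^4) : P2) ≠ 0 by simpa using pow_ne_zero 4 hb0)
      have L1 := congrArg (C : ℂ → P2) K1
      have L2 := congrArg (C : ℂ → P2) K2
      have L3 := congrArg (C : ℂ → P2) K3
      have L4 := congrArg (C : ℂ → P2) K4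
      have Lt1 := congrArg (C : ℂ → P2) ht1
      have Lt2 := congrArg (C : ℂ → P2) ht2
      simp only [C_mul, C_add, C_sub, C_neg, C_pow, C_0, C_1, map_ofNat]
        at L1 L2 L3 L4 Lt1 Lt2
      rw [hrep]
      simp only [monomial_sg, C_mul, C_add, C_sub, C_neg, C_pow, C_0, C_1,
        map_ofNat, one_mul, zero_mul, zero_add, add_zero]
      linear_combination (X 0:P2)^3 * X 1 * L1 + (X 0:P2)^2 * (X 1)^2 * L2
        + (X 0:P2) * (X 1)^3 * L3 + (X 1:P2)^4 * L4
        - ((C b * X 0 - (C a + 1) * X 1 : P2))^3 * X 0 * Lt1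
        - ((C b * X 0 - (C a + 1) * X 1 : P2))^3 * X 1 * Lt2
    · -- s = 1/4
      have hs : a^2 + b*cc = 1/4 := by linear_combination (1/4 : ℂ)*HS4
      have K1 : 16*(b^4*c1) = (-64*a*b^3-32*b^3)*c0 := by linear_combination 16*b^3*H1
      have K2 : 16*(b^4*c2) = (96*a^2*b^2+96*a*b^2+24*b^2)*c0 := by
        linear_combination (8*b^2)*H2 + (-32*b^2*c0)*hs
      have K3 : 16*(b^4*c3) = (-64*a^3*b-96*a^2*b-48*a*b-8*b)*c0 := by
        linear_combination (16*b/3)*H3 + (16*(12*a*b+10*b)/3*c0)*hs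
      have K4 : 16*(b^4*c4) = (16*a^4+32*a^3+24*a^2+8*a+1)*c0 := by
        linear_combination ((16:ℂ)/12)*H4 + (16*(-12*a^2-40*a+12*b*cc-29)/12*c0)*hs
      have ht1 : 16*(b^4*(c0/(8*b^3))) = 2*(b*c0) := by field_simp; ring
      have ht2 : 16*(b^4*(-((2*a+1)*c0)/(16*b^4))) = -((2*a+1)*c0) := by field_simp
      refine ⟨C (2*b) * X 0 + C (-(2*a+1)) * X 1,
        C (c0/(8*b^3)) * X 0 + C (-((2*a+1)*c0)/(16*b^4)) * X 1,
        isLin _ _ (Or.inl (mul_ne_zero two_ne_zero hb0)),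
        isLin _ _ (Or.inl (div_ne_zero hc0ne
          (mul_ne_zero (by norm_num) (pow_ne_zero _ hb0)))), ?_⟩
      apply mul_left_cancel₀ (show (C (16*b^4) : P2) ≠ 0 by
        simpa using mul_ne_zero (by norm_num : (16:ℂ) ≠ 0) (pow_ne_zero 4 hb0))
      have L1 := congrArg (C : ℂ → P2) K1
      have L2 := congrArg (C : ℂ → P2) K2
      have L3 := congrArg (C : ℂ → P2) K3
      have L4 := congrArg (C : ℂ → P2) K4
      have Lt1 := congrArg (C : ℂ → P2) ht1
      have Lt2 := congrArg (C : ℂ → P2) ht2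
      simp only [C_mul, C_add, C_sub, C_neg, C_pow, C_0, C_1, map_ofNat]
        at L1 L2 L3 L4 Lt1 Lt2
      rw [hrep]
      simp only [monomial_sg, C_mul, C_add, C_sub, C_neg, C_pow, C_0, C_1,
        map_ofNat, one_mul, zero_mul, zero_add, add_zero]
      linear_combination (X 0:P2)^3 * X 1 * L1 + (X 0:P2)^2 * (X 1)^2 * L2
        + (X 0:P2) * (X 1)^3 * L3 + (X 1:P2)^4 * L4
        - (((2:P2) * C b * X 0 - (2 * C a + 1) * X 1))^3 * X 0 * Lt1
        - (((2:P2) * C b * X 0 - (2 * C a + 1) * X 1))^3 * X 1 * Lt2
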